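/- Let F be a field, let α ∈ F have multiplicative order at least n, and let t ≤ n. Consider the linear map from F^n to F^t sending x to H·x, where H is the t × n matrix with entry α^(i·j) in row i, column j. Then the kernel of this map is a subspace of F^n of dimension exactly n − t. -/

import Mathlib

/-- The kernel of the linear map `x ↦ H.mulVec x`, where `H` is the `t × n`
protection matrix with entry `α ^ (i * j)`, has dimension exactly `n - t`. -/
theorem nps_t_kernel_dim {F : Type*} [Field F] (n t : ℕ) (α : F)
    (hα : ∀ i j : ℕ, i < n → j < n → α ^ i = α ^ j → i = j) (htn : t ≤ n) :
    Module.finrank F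
      (LinearMap.ker (Matrix.mulVecLin
        ((Matrix.of fun (i : Fin t) (j : Fin n) => α ^ (i.1 * j.1)) :
          Matrix (Fin t) (Fin n) F))) = n - t := by
  set H : Matrix (Fin t) (Fin n) F :=
    Matrix.of fun (i : Fin t) (j : Fin n) => α ^ (i.1 * j.1) with hH
  -- the leading t × t submatrix is a Vandermonde matrix with distinct nodes
  set N : Matrix (Fin t) (Fin t) F := Matrix.vandermonde (fun j : Fin t => α ^ j.1) with hN
  have hdet : IsUnit N.det := by
    rw [isUnit_iff_ne_zero, hN, Ne, Matrix.det_vandermonde_eq_zero_iff]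
    rintro ⟨i, j, hij, hne⟩
    exact hne (Fin.ext (hα i j (lt_of_lt_of_le i.2 htn) (lt_of_lt_of_le j.2 htn) hij))
  -- mulVecLin H is surjective
  have hsurj : Function.Surjective (Matrix.mulVecLin H) := by
    intro y
    obtain ⟨x', hx'⟩ := (Matrix.mulVec_surjective_iff_isUnit.mpr
      (Matrix.isUnit_iff_isUnit_det N |>.mpr hdet)) y
    refine ⟨fun j => if h : (j : ℕ) < t then x' ⟨j, h⟩ else 0, ?_⟩
    funext i
    rw [← hx']
    simp only [Matrix.mulVecLin_apply, Matrix.mulVec, dotProduct]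
    set f : ℕ → F := fun j => if h : j < t then N i ⟨j, h⟩ * x' ⟨j, h⟩ else 0 with hf
    have h1 : (∑ j : Fin n, H i j * if h : (j : ℕ) < t then x' ⟨j, h⟩ else 0)
        = ∑ j ∈ Finset.range n, f j := by
      rw [← Fin.sum_univ_eq_sum_range f n]
      refine Finset.sum_congr rfl fun j _ => ?_
      by_cases h : (j : ℕ) < t
      · simp [hf, h, hH, hN, Matrix.vandermonde, pow_mul, mul_comm (i : ℕ) (j : ℕ)]
      · simp [hf, h]
    have h2 : (∑ j : Fin t, N i j * x' j) = ∑ j ∈ Finset.range t, f j := by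
      rw [← Fin.sum_univ_eq_sum_range f t]
      refine Finset.sum_congr rfl fun j _ => ?_
      simp [hf, j.2]
    rw [h1, h2]
    exact (Finset.sum_subset (Finset.range_subset_range.mpr htn)
      (fun j _ hj => by simp [hf, by simpa using hj])).symm
  have hrn := LinearMap.finrank_range_add_finrank_ker (Matrix.mulVecLin H)
  rw [LinearMap.range_eq_top.mpr hsurj, finrank_top, Module.finrank_fintype_fun_eq_card,
    Module.finrank_fintype_fun_eq_card, Fintype.card_fin, Fintype.card_fin] at hrn
  omega
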